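/- Let (L_n) be a sequence in (0,1) with L_n → 0, and for each n let p_n be a positive, L_n-periodic, C² solution of (a_{L_n}(x) p_n')' + f(x/L_n, p_n) = 0 on ℝ with 0 < p_n ≤ M. Then the sequence (p_n) is bounded in H¹_loc(ℝ): for every compact interval K ⊂ ℝ there is a constant C(K), independent of n, such that ∫_K (p_n(x)² + p_n'(x)²) dx ≤ C(K) for all n. -/

import Mathlib

open MeasureTheory Filter Topology

/-- If `Lₙ ∈ (0,1)`, `Lₙ → 0`, and `pₙ` are positive `Lₙ`-periodic `C²`
stationary states with `0 < pₙ ≤ M`, then `(pₙ)` is bounded in `H¹_loc(ℝ)`: on every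
compact interval `K` one has `∫_K (pₙ² + (pₙ')²) ≤ C(K)` with `C(K)` independent
of `n`. -/
theorem stationary_states_bounded_in_H1loc
    (a : ℝ → ℝ) (f : ℝ → ℝ → ℝ) (α₁ α₂ M : ℝ)
    (L : ℕ → ℝ) (p : ℕ → ℝ → ℝ)
    (ha_C2 : ContDiff ℝ 2 a) (ha_per : ∀ x, a (x + 1) = a x)
    (hα₁ : 0 < α₁) (hα₁₂ : α₁ < α₂)
    (ha_lb : ∀ x, α₁ ≤ a x) (ha_ub : ∀ x, a x ≤ α₂)
    (hf_per : ∀ x s, f (x + 1) s = f x s)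
    (hf_C1 : ContDiff ℝ 1 (fun q : ℝ × ℝ => f q.1 q.2))
    (hf_zero : ∀ x, f x 0 = 0)
    (hM : 0 ≤ M) (hf_M : ∀ x s, M ≤ s → f x s ≤ 0)
    (hL : ∀ n, 0 < L n ∧ L n < 1)
    (hL0 : Tendsto L atTop (𝓝 0))
    (hp_C2 : ∀ n, ContDiff ℝ 2 (p n))
    (hp_pos : ∀ n x, 0 < p n x) (hp_le : ∀ n x, p n x ≤ M)
    (hp_per : ∀ n x, p n (x + L n) = p n x)
    (hp_eq : ∀ n x,
      deriv (fun y => a (y / L n) * deriv (p n) y) x + f (x / L n) (p n x) = 0) :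
    ∀ x₁ x₂ : ℝ, x₁ ≤ x₂ →
      ∃ C : ℝ, ∀ n,
        (∫ x in x₁..x₂, ((p n x) ^ 2 + (deriv (p n) x) ^ 2)) ≤ C := by
  intro x₁ x₂ hx12
  -- A uniform bound F on |f| on ℝ × [0, M].
  have hfc : Continuous (fun q : ℝ × ℝ => f q.1 q.2) := hf_C1.continuous
  obtain ⟨F₀, hF₀⟩ := ((isCompact_Icc (a := (0:ℝ)) (b := 1)).prod
      (isCompact_Icc (a := (0:ℝ)) (b := M))).exists_bound_of_continuousOn
      hfc.continuousOn
  set F : ℝ := max F₀ 0 with hFdef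
  have hF0 : 0 ≤ F := le_max_right _ _
  have hFb : ∀ x s, 0 ≤ s → s ≤ M → |f x s| ≤ F := by
    intro x s hs0 hsM
    have hper : Function.Periodic (fun y => f y s) 1 := fun y => hf_per y s
    have h1 : f (Int.fract x) s = f x s := by
      have h := hper.sub_int_mul_eq (x := x) ⌊x⌋
      rw [mul_one, Int.self_sub_floor] at h
      exact h
    have h2 : |f (Int.fract x) s| ≤ F₀ := by
      have := hF₀ (Int.fract x, s) ⟨⟨Int.fract_nonneg x, (Int.fract_lt_one x).le⟩, ⟨hs0, hsM⟩⟩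
      simpa using this
    rw [← h1]
    exact h2.trans (le_max_left _ _)
  -- Uniform bound on the derivative.
  have hderiv_bd : ∀ n x, |deriv (p n) x| ≤ F / α₁ := by
    intro n x
    obtain ⟨hLn, hLn1⟩ := hL n
    -- Rolle: a zero of the derivative in (x - L n, x)
    have hpx : p n (x - L n) = p n x := by
      have := hp_per n (x - L n); rw [sub_add_cancel] at this; exact this.symm
    obtain ⟨c, hc, hc0⟩ := exists_deriv_eq_zero (f := p n)
      (by linarith : x - L n < x) ((hp_C2 n).continuous.continuousOn) hpx
    set g : ℝ → ℝ := fun y => a (y / L n) * deriv (p n) y with hgdef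
    have hpd1 : ContDiff ℝ 1 (deriv (p n)) := by
      have h2 : ContDiff ℝ ((1 : ℕ) + 1) (p n) := by exact_mod_cast hp_C2 n
      exact (contDiff_succ_iff_deriv.mp h2).2.2
    have hadiff : Differentiable ℝ (fun y : ℝ => a (y / L n)) :=
      (ha_C2.differentiable (by norm_num)).comp (differentiable_id.div_const _)
    have hgdiff : Differentiable ℝ g :=
      hadiff.mul (hpd1.differentiable one_ne_zero)
    have hgderiv : deriv g = fun y => -(f (y / L n) (p n y)) := by
      funext y
      have := hp_eq n y
      linarith
    have hgderiv_cont : Continuous (deriv g) := by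
      rw [hgderiv]
      exact (hfc.comp ((continuous_id.div_const _).prodMk (hp_C2 n).continuous)).neg
    have hgc : g c = 0 := by simp [hgdef, hc0]
    have hftc : ∫ y in c..x, deriv g y = g x - g c :=
      intervalIntegral.integral_deriv_eq_sub (fun y _ => hgdiff y)
        (hgderiv_cont.intervalIntegrable _ _)
    have hbound : |g x - g c| ≤ F * |x - c| := by
      rw [← hftc]
      have : ∀ y ∈ Set.uIoc c x, ‖deriv g y‖ ≤ F := by
        intro y _
        rw [hgderiv]
        simpa using hFb (y / L n) (p n y) (hp_pos n y).le (hp_le n y)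
      simpa using intervalIntegral.norm_integral_le_of_norm_le_const this
    have hxc : |x - c| ≤ 1 := by
      rw [abs_of_nonneg (by linarith [hc.2] : (0:ℝ) ≤ x - c)]
      have := hc.1
      linarith
    have hgx : |g x| ≤ F := by
      calc |g x| = |g x - g c| := by rw [hgc, sub_zero]
        _ ≤ F * |x - c| := hbound
        _ ≤ F * 1 := by exact mul_le_mul_of_nonneg_left hxc hF0
        _ = F := mul_one F
    have hax : α₁ ≤ a (x / L n) := ha_lb _
    have : α₁ * |deriv (p n) x| ≤ F := by
      calc α₁ * |deriv (p n) x| ≤ a (x / L n) * |deriv (p n) x| :=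
            mul_le_mul_of_nonneg_right hax (abs_nonneg _)
        _ = |g x| := by rw [hgdef, abs_mul, abs_of_pos (lt_of_lt_of_le hα₁ hax)]
        _ ≤ F := hgx
    rw [le_div_iff₀ hα₁]
    linarith [this]
  -- Conclude.
  refine ⟨(x₂ - x₁) * (M ^ 2 + (F / α₁) ^ 2), fun n => ?_⟩
  have hint : IntervalIntegrable (fun x => (p n x) ^ 2 + (deriv (p n) x) ^ 2)
      MeasureTheory.volume x₁ x₂ := by
    apply Continuous.intervalIntegrable
    exact ((hp_C2 n).continuous.pow 2).add (((hp_C2 n).continuous_deriv (by norm_num)).pow 2)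
  have hmono : ∀ x ∈ Set.Icc x₁ x₂,
      (p n x) ^ 2 + (deriv (p n) x) ^ 2 ≤ M ^ 2 + (F / α₁) ^ 2 := by
    intro x _
    have h1 : (p n x) ^ 2 ≤ M ^ 2 :=
      sq_le_sq' (by linarith [hp_pos n x, hM]) (hp_le n x)
    have h2 : (deriv (p n) x) ^ 2 ≤ (F / α₁) ^ 2 := by
      have := abs_le.mp (hderiv_bd n x)
      exact sq_le_sq' this.1 this.2
    linarith
  calc (∫ x in x₁..x₂, ((p n x) ^ 2 + (deriv (p n) x) ^ 2))
      ≤ ∫ _x in x₁..x₂, (M ^ 2 + (F / α₁) ^ 2) :=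
        intervalIntegral.integral_mono_on hx12 hint (intervalIntegrable_const) hmono
    _ = (x₂ - x₁) * (M ^ 2 + (F / α₁) ^ 2) := by
        rw [intervalIntegral.integral_const, smul_eq_mul]
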